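/- Let N ≥ 1, let θ_L < θ_R be real numbers, and let Λ^N be the probability measure on ℝ^N with density N!/(θ_R − θ_L)^N · 1{θ_L ≤ θ₁ ≤ θ₂ ≤ … ≤ θ_N ≤ θ_R}, i.e. the joint law of the order statistics of N i.i.d. uniform random variables on [θ_L, θ_R]. Let f : ℝ^N → ℝ be continuously differentiable on [θ_L, θ_R]^N and define 𝓛f(θ) = ∫₀¹ u^{−1}[f(θ + u(θ_L − θ₁)δ₁) − f(θ)] du + ∫₀¹ u^{−1}[f(θ + u(θ_R − θ_N)δ_N) − f(θ)] du + ∑_{i=1}^{N−1} ∫₀¹ u^{−1}[f(θ + u(θ_{i+1} − θ_i)δ_i) + f(θ + u(θ_i − θ_{i+1})δ_{i+1}) − 2 f(θ)] du, where δ_i is the i-th coordinate unit vector. Then all integrals converge absolutely and ∫ 𝓛f(θ) Λ^N(dθ) = 0; i.e., the order statistics of N uniforms on [θ_L, θ_R] is stationary for the hidden-parameter model of the boundary-driven harmonic chain. -/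

import Mathlib

open MeasureTheory Real Set

/-- The integrand (with respect to the jump measure `u⁻¹ du` on `(0,1)`) of the generator of
the hidden-parameter model of the boundary-driven harmonic chain on sites `{1,…,N}` with
reservoir parameters `θL, θR`: boundary terms move `θ₁` (resp. `θ_N`) by a fraction `u`
towards `θL` (resp. `θR`), bulk terms move `θ_i` towards `θ_{i+1}` or `θ_{i+1}` towards
`θ_i`. -/
noncomputable def hiddenChainGenInt (N : ℕ) (hN : 0 < N) (θL θR : ℝ)
    (f : (Fin N → ℝ) → ℝ) (θ : Fin N → ℝ) (u : ℝ) : ℝ :=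
  u⁻¹ *
    ((f (Function.update θ ⟨0, hN⟩ (θ ⟨0, hN⟩ + u * (θL - θ ⟨0, hN⟩))) - f θ) +
     (f (Function.update θ ⟨N - 1, by omega⟩ (θ ⟨N - 1, by omega⟩ +
          u * (θR - θ ⟨N - 1, by omega⟩))) - f θ) +
     ∑ i : Fin (N - 1),
       (f (Function.update θ ⟨i.1, by omega⟩ (θ ⟨i.1, by omega⟩ +
            u * (θ ⟨i.1 + 1, by omega⟩ - θ ⟨i.1, by omega⟩))) +
        f (Function.update θ ⟨i.1 + 1, by omega⟩ (θ ⟨i.1 + 1, by omega⟩ +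
            u * (θ ⟨i.1, by omega⟩ - θ ⟨i.1 + 1, by omega⟩))) -
        2 * f θ))

namespace HiddenChain
variable {n : ℕ} {θL θR : ℝ}

/-- the ordered simplex -/
def oS (n : ℕ) (θL θR : ℝ) : Set (Fin n → ℝ) :=
  {θ | Monotone θ ∧ ∀ i, θ i ∈ Set.Icc θL θR}

lemma isClosed_monotone : IsClosed {θ : Fin n → ℝ | Monotone θ} := by
  have h : {θ : Fin n → ℝ | Monotone θ}
      = ⋂ (p : {p : Fin n × Fin n // p.1 ≤ p.2}), {θ | θ p.1.1 ≤ θ p.1.2} := by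
    ext θ
    simp only [Set.mem_iInter, Set.mem_setOf_eq, Subtype.forall, Prod.forall]
    exact ⟨fun h a b hab => h hab, fun h a b hab => h a b hab⟩
  rw [h]
  exact isClosed_iInter fun p => isClosed_le (continuous_apply _) (continuous_apply _)

lemma isClosed_oS : IsClosed (oS n θL θR) := by
  have h : oS n θL θR = {θ : Fin n → ℝ | Monotone θ}
      ∩ ⋂ i, (fun θ : Fin n → ℝ => θ i) ⁻¹' Icc θL θR := by
    ext θ; simp [oS, Set.mem_iInter]
  rw [h]
  exact isClosed_monotone.inter
    (isClosed_iInter fun i => isClosed_Icc.preimage (continuous_apply i))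

lemma mem_box_iff {θ : Fin n → ℝ} :
    θ ∈ Set.Icc (fun _ => θL) (fun _ => θR) ↔ ∀ i, θ i ∈ Set.Icc θL θR := by
  simp [Set.mem_Icc, Pi.le_def, forall_and]

lemma oS_subset_box' : oS n θL θR ⊆ Set.Icc (fun _ => θL) (fun _ => θR) :=
  fun θ h => mem_box_iff.2 h.2

lemma isCompact_box : IsCompact (Set.Icc (fun _ : Fin n => θL) (fun _ => θR)) :=
  isCompact_Icc

lemma isCompact_oS' : IsCompact (oS n θL θR) :=
  IsCompact.of_isClosed_subset isCompact_box isClosed_oS oS_subset_box'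

lemma measurableSet_oS' : MeasurableSet (oS n θL θR) :=
  isClosed_oS.measurableSet

lemma volume_oS_lt_top' : volume (oS n θL θR) < ⊤ :=
  isCompact_oS'.measure_lt_top

/-- value formula for `succAbove` -/
lemma succAbove_coe' (m : Fin (n+1)) (j : Fin n) :
    ((m.succAbove j : Fin (n+1)) : ℕ) = if (j : ℕ) < (m : ℕ) then (j : ℕ) else (j : ℕ) + 1 := by
  rw [Fin.succAbove]
  split_ifs with h1 h2 h2 <;>
    simp_all [Fin.lt_def, Fin.castSucc, Fin.val_succ]

/-- value formula for `insertNth` -/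
lemma insertNth_coe' (m : Fin (n+1)) (z : ℝ) (θ : Fin n → ℝ) (k : Fin (n+1)) :
    (Fin.insertNth m z θ : Fin (n+1) → ℝ) k =
      if h : (k : ℕ) < (m : ℕ) then θ ⟨k, by omega⟩
      else if h2 : (k : ℕ) = (m : ℕ) then z
      else θ ⟨(k : ℕ) - 1, by omega⟩ := by
  rcases eq_or_ne k m with rfl | hk
  · simp
  · obtain ⟨j, rfl⟩ := Fin.exists_succAbove_eq hk
    rw [Fin.insertNth_apply_succAbove]
    have hc := succAbove_coe' m j
    by_cases hj : (j : ℕ) < (m : ℕ)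
    · rw [if_pos hj] at hc
      rw [dif_pos (by omega)]
      congr 1
      apply Fin.ext
      simp only [Fin.val_mk, hc]
    · rw [if_neg hj] at hc
      rw [dif_neg (by omega), dif_neg (by omega)]
      congr 1
      apply Fin.ext
      simp only [Fin.val_mk, hc]
      omega


lemma monotone_iff_nat {k : ℕ} (g : Fin k → ℝ) :
    Monotone g ↔ ∀ a (h : a + 1 < k), g ⟨a, by omega⟩ ≤ g ⟨a + 1, h⟩ := by
  constructor
  · intro hg a h
    exact hg (by simp only [Fin.le_def, Fin.val_mk]; omega)
  · intro h a b hab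
    obtain ⟨a, ha⟩ := a
    obtain ⟨b, hb⟩ := b
    simp only [Fin.le_def, Fin.val_mk] at hab
    have key : ∀ b (hb : b < k), a ≤ b → g ⟨a, ha⟩ ≤ g ⟨b, hb⟩ := by
      intro b
      induction b with
      | zero =>
        intro hb hab
        exact le_of_eq (congrArg g (Fin.ext (by simp only [Fin.val_mk]; omega)))
      | succ b ih =>
        intro hb hab
        rcases Nat.lt_or_ge a (b + 1) with h' | h'
        · exact le_trans (ih (by omega) (by omega)) (h b hb)
        · exact le_of_eq (congrArg g (Fin.ext (by simp only [Fin.val_mk]; omega)))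
    exact key b hb hab

def nbLo (θL : ℝ) (m : Fin (n+1)) (θ : Fin n → ℝ) : ℝ :=
  if h : 0 < (m : ℕ) then θ ⟨(m : ℕ) - 1, by have := m.isLt; omega⟩ else θL

def nbHi (θR : ℝ) (m : Fin (n+1)) (θ : Fin n → ℝ) : ℝ :=
  if h : (m : ℕ) < n then θ ⟨(m : ℕ), h⟩ else θR

lemma insertNth_mem_oS_iff' (m : Fin (n+1)) (z : ℝ) (θ : Fin n → ℝ) :
    (Fin.insertNth m z θ : Fin (n+1) → ℝ) ∈ oS (n+1) θL θR ↔
      θ ∈ oS n θL θR ∧ nbLo θL m θ ≤ z ∧ z ≤ nbHi θR m θ := by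
  have hm := m.isLt
  set η : Fin (n+1) → ℝ := Fin.insertNth m z θ with hη
  have hL : ∀ (a : ℕ) (h : a < n + 1) (h' : a < (m : ℕ)),
      η ⟨a, h⟩ = θ ⟨a, by omega⟩ := by
    intro a h h'
    rw [hη, insertNth_coe' m z θ ⟨a, h⟩, dif_pos (show ((⟨a,h⟩ : Fin (n+1)) : ℕ) < (m:ℕ) from h')]
  have hM : ∀ (h : (m : ℕ) < n + 1), η ⟨(m : ℕ), h⟩ = z := by
    intro h
    rw [hη, insertNth_coe' m z θ ⟨(m : ℕ), h⟩,
      dif_neg (show ¬((⟨(m:ℕ),h⟩ : Fin (n+1)) : ℕ) < (m:ℕ) by simp only [Fin.val_mk]; omega),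
      dif_pos rfl]
  have hR : ∀ (a : ℕ) (h : a < n + 1) (h' : (m : ℕ) < a),
      η ⟨a, h⟩ = θ ⟨a - 1, by omega⟩ := by
    intro a h h'
    rw [hη, insertNth_coe' m z θ ⟨a, h⟩,
      dif_neg (show ¬((⟨a,h⟩ : Fin (n+1)) : ℕ) < (m:ℕ) by simp only [Fin.val_mk]; omega),
      dif_neg (show ¬((⟨a,h⟩ : Fin (n+1)) : ℕ) = (m:ℕ) by simp only [Fin.val_mk]; omega)]
  constructor
  · rintro ⟨hmono, hbox⟩
    have hθη : ∀ (a : ℕ) (h : a < n),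
        θ ⟨a, h⟩ = η ⟨if a < (m : ℕ) then a else a + 1, by split <;> omega⟩ := by
      intro a h
      split
      · rw [hL a (by omega) (by assumption)]
      · rw [hR (a+1) (by omega) (by omega)]
        congr 1
    have hθmono : Monotone θ := by
      rw [monotone_iff_nat]
      intro a h
      rw [hθη a (by omega), hθη (a+1) h]
      refine hmono ?_
      simp only [Fin.le_def, Fin.val_mk]
      split_ifs <;> omega
    refine ⟨⟨hθmono, fun i => by
      rw [show θ i = θ ⟨(i:ℕ), i.isLt⟩ from rfl, hθη]; exact hbox _⟩, ?_, ?_⟩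
    · unfold nbLo
      rcases (by omega : 0 < (m:ℕ) ∨ (m:ℕ) = 0) with h | h
      · rw [dif_pos h, ← hL ((m:ℕ)-1) (by omega) (by omega), ← hM (by omega)]
        exact hmono (by simp only [Fin.le_def, Fin.val_mk]; omega)
      · rw [dif_neg (by omega), ← hM (by omega)]
        exact (hbox _).1
    · unfold nbHi
      rcases (by omega : (m:ℕ) < n ∨ (m:ℕ) = n) with h | h
      · rw [dif_pos h, ← hM (by omega)]
        calc η ⟨(m:ℕ), by omega⟩ ≤ η ⟨(m:ℕ)+1, by omega⟩ :=
              hmono (by simp only [Fin.le_def, Fin.val_mk]; omega)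
          _ = θ ⟨(m:ℕ)+1-1, by omega⟩ := hR ((m:ℕ)+1) (by omega) (by omega)
          _ = θ ⟨(m:ℕ), h⟩ := by congr 1
      · rw [dif_neg (by omega), ← hM (by omega)]
        exact (hbox _).2
  · rintro ⟨⟨hθmono, hθbox⟩, h1, h2⟩
    have hzL : θL ≤ z := by
      unfold nbLo at h1
      rcases (by omega : 0 < (m:ℕ) ∨ (m:ℕ) = 0) with h | h
      · rw [dif_pos h] at h1
        exact le_trans (hθbox _).1 h1
      · rwa [dif_neg (by omega)] at h1
    have hzR : z ≤ θR := by
      unfold nbHi at h2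
      rcases (by omega : (m:ℕ) < n ∨ (m:ℕ) = n) with h | h
      · rw [dif_pos h] at h2
        exact le_trans h2 (hθbox _).2
      · rwa [dif_neg (by omega)] at h2
    constructor
    · rw [monotone_iff_nat]
      intro a h
      rcases (by omega : a + 1 < (m:ℕ) ∨ a + 1 = (m:ℕ) ∨ a = (m:ℕ) ∨ (m:ℕ) < a)
        with h' | h' | h' | h'
      · rw [hL a (by omega) (by omega), hL (a+1) (by omega) (by omega)]
        exact hθmono (by simp only [Fin.le_def, Fin.val_mk]; omega)
      · rw [hL a (by omega) (by omega),
          show (⟨a+1, h⟩ : Fin (n+1)) = ⟨(m:ℕ), by omega⟩ from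
            Fin.ext (by simp only [Fin.val_mk]; omega), hM (by omega)]
        refine le_trans ?_ h1
        unfold nbLo
        rw [dif_pos (by omega)]
        exact le_of_eq (congrArg θ (Fin.ext (by simp only [Fin.val_mk]; omega)))
      · rw [show (⟨a, by omega⟩ : Fin (n+1)) = ⟨(m:ℕ), by omega⟩ from
            Fin.ext (by simp only [Fin.val_mk]; omega), hM (by omega),
          hR (a+1) (by omega) (by omega)]
        refine le_trans h2 ?_
        unfold nbHi
        rw [dif_pos (by omega)]
        exact le_of_eq (congrArg θ (Fin.ext (by simp only [Fin.val_mk]; omega)))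
      · rw [hR a (by omega) (by omega), hR (a+1) (by omega) (by omega)]
        exact hθmono (by simp only [Fin.le_def, Fin.val_mk]; omega)
    · intro k
      obtain ⟨a, ha⟩ := k
      rcases (by omega : a < (m:ℕ) ∨ a = (m:ℕ) ∨ (m:ℕ) < a) with h' | h' | h'
      · rw [hL a ha h']
        exact hθbox _
      · rw [show (⟨a, ha⟩ : Fin (n+1)) = ⟨(m:ℕ), by omega⟩ from
          Fin.ext (by simp only [Fin.val_mk]; omega), hM (by omega)]
        exact ⟨hzL, hzR⟩
      · rw [hR a ha h']
        exact hθbox _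

/-- deletion of the `k`-th coordinate -/
def del (k : Fin (n+1)) (η : Fin (n+1) → ℝ) : Fin n → ℝ := fun j => η (k.succAbove j)

lemma del_insert_same' (m : Fin (n+1)) (z : ℝ) (θ : Fin n → ℝ) :
    del m (Fin.insertNth m z θ) = θ := by
  funext j
  exact Fin.insertNth_apply_succAbove (α := fun _ => ℝ) m z θ j

lemma insert_apply_same' (m : Fin (n+1)) (z : ℝ) (θ : Fin n → ℝ) :
    (Fin.insertNth m z θ : Fin (n+1) → ℝ) m = z :=
  Fin.insertNth_apply_same (α := fun _ => ℝ) m z θ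

lemma del_castSucc_insert_succ' (i : Fin n) (z : ℝ) (θ : Fin n → ℝ) :
    del i.castSucc (Fin.insertNth i.succ z θ) = Function.update θ i z := by
  funext j
  have hv := succAbove_coe' i.castSucc j
  rw [Fin.coe_castSucc] at hv
  rw [del, insertNth_coe', Function.update_apply]
  rcases Nat.lt_trichotomy (j : ℕ) (i : ℕ) with h | h | h
  · rw [if_pos h] at hv
    rw [dif_pos (by simp only [hv, Fin.val_succ]; omega),
      if_neg (show ¬ j = i from by rw [Fin.ext_iff]; omega)]
    exact congrArg θ (Fin.ext (by simp only [Fin.val_mk, hv]; try omega))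
  · rw [if_neg (by omega)] at hv
    rw [dif_neg (by simp only [hv, Fin.val_succ]; omega),
      dif_pos (by simp only [hv, Fin.val_succ]; omega),
      if_pos (show j = i from by rw [Fin.ext_iff]; omega)]
  · rw [if_neg (by omega)] at hv
    rw [dif_neg (by simp only [hv, Fin.val_succ]; omega),
      dif_neg (by simp only [hv, Fin.val_succ]; omega),
      if_neg (show ¬ j = i from by rw [Fin.ext_iff]; omega)]
    exact congrArg θ (Fin.ext (by simp only [Fin.val_mk, hv]; try omega))

lemma del_succ_insert_castSucc' (i : Fin n) (z : ℝ) (θ : Fin n → ℝ) :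
    del i.succ (Fin.insertNth i.castSucc z θ) = Function.update θ i z := by
  funext j
  have hv := succAbove_coe' i.succ j
  rw [Fin.val_succ] at hv
  rw [del, insertNth_coe', Function.update_apply]
  rcases Nat.lt_trichotomy (j : ℕ) (i : ℕ) with h | h | h
  · rw [if_pos (by omega)] at hv
    rw [dif_pos (by simp only [hv, Fin.coe_castSucc]; omega),
      if_neg (show ¬ j = i from by rw [Fin.ext_iff]; omega)]
    exact congrArg θ (Fin.ext (by simp only [Fin.val_mk, hv]; try omega))
  · rw [if_pos (by omega)] at hv
    rw [dif_neg (by simp only [hv, Fin.coe_castSucc]; omega),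
      dif_pos (by simp only [hv, Fin.coe_castSucc]; omega),
      if_pos (show j = i from by rw [Fin.ext_iff]; omega)]
  · rw [if_neg (by omega)] at hv
    rw [dif_neg (by simp only [hv, Fin.coe_castSucc]; omega),
      dif_neg (by simp only [hv, Fin.coe_castSucc]; omega),
      if_neg (show ¬ j = i from by rw [Fin.ext_iff]; omega)]
    exact congrArg θ (Fin.ext (by simp only [Fin.val_mk, hv]; try omega))

lemma insert_succ_at_castSucc' (i : Fin n) (z : ℝ) (θ : Fin n → ℝ) :
    (Fin.insertNth i.succ z θ : Fin (n+1) → ℝ) i.castSucc = θ i := by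
  rw [insertNth_coe', dif_pos (by simp only [Fin.coe_castSucc, Fin.val_succ]; omega)]
  exact congrArg θ (Fin.ext (by simp only [Fin.val_mk, Fin.coe_castSucc]))

lemma insert_castSucc_at_succ' (i : Fin n) (z : ℝ) (θ : Fin n → ℝ) :
    (Fin.insertNth i.castSucc z θ : Fin (n+1) → ℝ) i.succ = θ i := by
  rw [insertNth_coe', dif_neg (by simp only [Fin.coe_castSucc, Fin.val_succ]; omega),
    dif_neg (by simp only [Fin.coe_castSucc, Fin.val_succ]; omega)]
  exact congrArg θ (Fin.ext (by simp only [Fin.val_mk, Fin.val_succ]; omega))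

/-- C¹ on the box implies a global Lipschitz-type bound on the box. -/
lemma exists_lip (hLR : θL < θR) (f : (Fin n → ℝ) → ℝ)
    (hf : ContDiffOn ℝ 1 f (Set.Icc (fun _ => θL) (fun _ => θR))) :
    ∃ K : ℝ, 0 ≤ K ∧ ∀ x ∈ Set.Icc (fun _ : Fin n => θL) (fun _ => θR),
      ∀ y ∈ Set.Icc (fun _ : Fin n => θL) (fun _ => θR), |f y - f x| ≤ K * ‖y - x‖ := by
  set B : Set (Fin n → ℝ) := Set.Icc (fun _ => θL) (fun _ => θR) with hB
  have hconv : Convex ℝ B := convex_Icc _ _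
  have hcomp : IsCompact B := isCompact_Icc
  have hne : (interior B).Nonempty := by
    set c : Fin n → ℝ := fun _ => (θL + θR) / 2 with hc
    refine ⟨c, ?_⟩
    have hball : Metric.ball c ((θR - θL) / 2) ⊆ B := by
      intro y hy
      simp only [Metric.mem_ball] at hy
      constructor
      · intro i
        have : dist (y i) (c i) ≤ dist y c := dist_le_pi_dist y c i
        have h2 : |y i - (θL + θR) / 2| < (θR - θL) / 2 := by
          rw [← Real.dist_eq]
          calc dist (y i) ((θL + θR)/2) = dist (y i) (c i) := rfl
            _ ≤ dist y c := dist_le_pi_dist y c i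
            _ < _ := hy
        have := abs_lt.1 h2
        simp only
        linarith [this.1]
      · intro i
        have h2 : |y i - (θL + θR) / 2| < (θR - θL) / 2 := by
          calc |y i - (θL + θR)/2| = dist (y i) (c i) := by rw [Real.dist_eq]
            _ ≤ dist y c := dist_le_pi_dist y c i
            _ < _ := hy
        have := abs_lt.1 h2
        simp only
        linarith [this.2]
    exact interior_maximal hball Metric.isOpen_ball (by
      simp only [Metric.mem_ball, dist_self]; linarith)
  have hux : UniqueDiffOn ℝ B := uniqueDiffOn_convex hconv hne
  have hdc : ContinuousOn (fderivWithin ℝ f B) B :=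
    hf.continuousOn_fderivWithin hux le_rfl
  obtain ⟨C, hC⟩ := hcomp.exists_bound_of_continuousOn hdc
  refine ⟨max C 0, le_max_right _ _, fun x hx y hy => ?_⟩
  rw [← Real.norm_eq_abs]
  exact Convex.norm_image_sub_le_of_norm_hasFDerivWithin_le (C := max C 0)
    (f' := fderivWithin ℝ f B)
    (fun w hw => ((hf.differentiableOn one_ne_zero) w hw).hasFDerivWithinAt)
    (fun w hw => le_max_of_le_left (hC w hw)) hconv hx hy

lemma sub1'' (F : ℝ → ℝ) (a b : ℝ) (hFa : F a = 0) :
    ∫ u in Ioo (0:ℝ) 1, u⁻¹ * F (a + u * (b - a)) = ∫ z in a..b, F z / (z - a) := by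
  rcases eq_or_ne b a with rfl | hba
  · simp [hFa]
  · have hc : b - a ≠ 0 := sub_ne_zero.2 hba
    have h1 : ∫ u in Ioo (0:ℝ) 1, u⁻¹ * F (a + u * (b - a))
        = ∫ u in (0:ℝ)..1, (fun z => (b - a) * (F z / (z - a))) ((b - a) * u + a) := by
      rw [intervalIntegral.integral_of_le zero_le_one,
        ← MeasureTheory.integral_Ioc_eq_integral_Ioo]
      refine MeasureTheory.setIntegral_congr_fun measurableSet_Ioc fun u hu => ?_
      have hu0 : u ≠ 0 := ne_of_gt hu.1
      have harg : (b - a) * u + a = a + u * (b - a) := by ring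
      simp only [harg, add_sub_cancel_left]
      field_simp
    rw [h1, intervalIntegral.integral_comp_mul_add (fun z => (b - a) * (F z / (z - a))) hc a]
    simp only [mul_zero, zero_add, mul_one, smul_eq_mul]
    rw [show b - a + a = b by ring, intervalIntegral.integral_const_mul, ← mul_assoc,
      inv_mul_cancel₀ hc, one_mul]

lemma core' (m : Fin (n+1)) (Φ : (Fin (n+1) → ℝ) → ℝ) {C : ℝ}
    (hmeas : AEStronglyMeasurable Φ (volume.restrict (oS (n+1) θL θR)))
    (hbd : ∀ η ∈ oS (n+1) θL θR, |Φ η| ≤ C) :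
    IntegrableOn (fun θ => ∫ z in Ioc (nbLo θL m θ) (nbHi θR m θ),
        Φ (Fin.insertNth m z θ)) (oS n θL θR) volume ∧
    (∫ θ in oS n θL θR, ∫ z in Ioc (nbLo θL m θ) (nbHi θR m θ), Φ (Fin.insertNth m z θ))
      = ∫ η in oS (n+1) θL θR, Φ η := by
  classical
  set S : Set (Fin n → ℝ) := oS n θL θR with hS
  set S' : Set (Fin (n+1) → ℝ) := oS (n+1) θL θR with hS'
  set e := MeasurableEquiv.piFinSuccAbove (fun _ : Fin (n+1) => ℝ) m with he
  have hmp : MeasurePreserving e volume volume :=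
    volume_preserving_piFinSuccAbove (fun _ : Fin (n+1) => ℝ) m
  have hmps : MeasurePreserving e.symm volume volume :=
    MeasurePreserving.symm e hmp
  have hsymm : ∀ p : ℝ × (Fin n → ℝ), e.symm p = Fin.insertNth m p.1 p.2 := by
    intro p
    rw [he]
    rfl
  set G : (Fin (n+1) → ℝ) → ℝ := S'.indicator Φ with hG
  set H : ℝ × (Fin n → ℝ) → ℝ := fun p => G (Fin.insertNth m p.1 p.2) with hH
  set E : Set (ℝ × (Fin n → ℝ)) := e.symm ⁻¹' S' with hE
  have hEmeas : MeasurableSet E := measurableSet_oS'.preimage e.symm.measurable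
  have hEmem : ∀ p : ℝ × (Fin n → ℝ), p ∈ E ↔ (Fin.insertNth m p.1 p.2 : Fin (n+1) → ℝ) ∈ S' := by
    intro p
    rw [hE, Set.mem_preimage, hsymm]
  have hHind : H = E.indicator fun p => Φ (Fin.insertNth m p.1 p.2) := by
    funext p
    by_cases hp : p ∈ E
    · rw [Set.indicator_of_mem hp, hH]
      simp only [hG]
      rw [Set.indicator_of_mem ((hEmem p).1 hp)]
    · rw [Set.indicator_of_notMem hp, hH]
      simp only [hG]
      rw [Set.indicator_of_notMem (fun hmem => hp ((hEmem p).2 hmem))]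
  -- integrability of H
  have hHmeas : AEStronglyMeasurable H volume := by
    rw [hHind]
    rw [aestronglyMeasurable_indicator_iff hEmeas]
    have h1 : AEStronglyMeasurable (Φ ∘ e.symm) (volume.restrict E) :=
      hmeas.comp_quasiMeasurePreserving
        ((hmps.restrict_preimage measurableSet_oS').quasiMeasurePreserving)
    refine h1.congr (Filter.Eventually.of_forall fun p => ?_)
    simp only [Function.comp_apply, hsymm]
  have hEvol : volume E < ⊤ := by
    rw [hE, hmps.measure_preimage measurableSet_oS'.nullMeasurableSet]
    exact volume_oS_lt_top'
  have hHint : Integrable H volume := by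
    refine Integrable.mono' (g := E.indicator fun _ => |C|) ?_ hHmeas ?_
    · rw [integrable_indicator_iff hEmeas]
      exact integrableOn_const hEvol.ne
    · refine Filter.Eventually.of_forall fun p => ?_
      rw [hHind]
      by_cases hp : p ∈ E
      · rw [Set.indicator_of_mem hp, Set.indicator_of_mem hp, Real.norm_eq_abs]
        exact le_trans (hbd _ ((hEmem p).1 hp)) (le_abs_self C)
      · rw [Set.indicator_of_notMem hp, Set.indicator_of_notMem hp]
        simp
  -- the chain of equalities
  have step1 : ∫ η in S', Φ η = ∫ η, G η := (integral_indicator measurableSet_oS').symm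
  have step2 : ∫ η, G η = ∫ p, H p := by
    rw [← MeasurePreserving.integral_comp hmps e.symm.measurableEmbedding G]
    refine integral_congr_ae (Filter.Eventually.of_forall fun p => ?_)
    simp only [hH]
    rw [hsymm p]
  have hHint' : Integrable H ((volume : Measure ℝ).prod (volume : Measure (Fin n → ℝ))) := by
    rw [← Measure.volume_eq_prod]
    exact hHint
  have step3 : ∫ p, H p = ∫ θ, ∫ z, H (z, θ) := by
    rw [show (volume : Measure (ℝ × (Fin n → ℝ)))
      = (volume : Measure ℝ).prod volume from Measure.volume_eq_prod _ _]
    exact integral_prod_symm H hHint'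
  have step4 : ∀ θ, (∫ z, H (z, θ))
      = S.indicator (fun θ => ∫ z in Ioc (nbLo θL m θ) (nbHi θR m θ),
          Φ (Fin.insertNth m z θ)) θ := by
    intro θ
    by_cases hθ : θ ∈ S
    · rw [Set.indicator_of_mem hθ]
      have hz : ∀ z, H (z, θ) = (Icc (nbLo θL m θ) (nbHi θR m θ)).indicator
          (fun z => Φ (Fin.insertNth m z θ)) z := by
        intro z
        simp only [hH, hG]
        by_cases hs : (Fin.insertNth m z θ : Fin (n+1) → ℝ) ∈ S'
        · rw [Set.indicator_of_mem hs, Set.indicator_of_mem]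
          have h2 := (insertNth_mem_oS_iff' m z θ).1 hs
          exact ⟨h2.2.1, h2.2.2⟩
        · rw [Set.indicator_of_notMem hs, Set.indicator_of_notMem]
          intro hzIcc
          exact hs ((insertNth_mem_oS_iff' m z θ).2 ⟨hθ, hzIcc.1, hzIcc.2⟩)
      rw [show (fun z => H (z, θ)) = (Icc (nbLo θL m θ) (nbHi θR m θ)).indicator
          (fun z => Φ (Fin.insertNth m z θ)) from funext hz]
      rw [integral_indicator measurableSet_Icc, integral_Icc_eq_integral_Ioc]
    · rw [Set.indicator_of_notMem hθ]
      have hz : ∀ z, H (z, θ) = 0 := by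
        intro z
        simp only [hH, hG]
        rw [Set.indicator_of_notMem]
        intro hs
        exact hθ ((insertNth_mem_oS_iff' m z θ).1 hs).1
      rw [show (fun z => H (z, θ)) = fun _ => (0:ℝ) from funext hz]
      simp
  have step5 : ∫ θ, ∫ z, H (z, θ)
      = ∫ θ in S, ∫ z in Ioc (nbLo θL m θ) (nbHi θR m θ), Φ (Fin.insertNth m z θ) := by
    rw [show (fun θ => ∫ z, H (z, θ)) = S.indicator (fun θ =>
        ∫ z in Ioc (nbLo θL m θ) (nbHi θR m θ), Φ (Fin.insertNth m z θ)) from funext step4]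
    exact integral_indicator measurableSet_oS'
  constructor
  · have hmarg : Integrable (fun θ => ∫ z, H (z, θ)) volume := hHint'.integral_prod_right
    have : Integrable (S.indicator (fun θ =>
        ∫ z in Ioc (nbLo θL m θ) (nbHi θR m θ), Φ (Fin.insertNth m z θ))) volume := by
      refine hmarg.congr (Filter.Eventually.of_forall fun θ => ?_)
      exact step4 θ
    exact (integrable_indicator_iff measurableSet_oS').1 this
  · rw [step1, step2, step3, step5]

section UpDown

variable (f : (Fin n → ℝ) → ℝ) {K : ℝ}

/-- the kernel of the `(n+1)`-dimensional representation -/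
noncomputable def Akern (f : (Fin n → ℝ) → ℝ) (i : Fin n) (η : Fin (n+1) → ℝ) : ℝ :=
  (f (del i.castSucc η) - f (del i.succ η)) / (η i.succ - η i.castSucc)

lemma del_mem_box (k : Fin (n+1)) (η : Fin (n+1) → ℝ)
    (hη : η ∈ Set.Icc (fun _ : Fin (n+1) => θL) (fun _ => θR)) :
    del k η ∈ Set.Icc (fun _ : Fin n => θL) (fun _ => θR) :=
  ⟨fun j => hη.1 _, fun j => hη.2 _⟩

lemma del_succ_apply_self (i : Fin n) (η : Fin (n+1) → ℝ) :
    del i.succ η i = η i.castSucc := by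
  rw [del]
  congr 1
  rw [Fin.succAbove,
    if_pos (by rw [Fin.lt_def]; simp only [Fin.coe_castSucc, Fin.val_succ]; omega)]

lemma del_castSucc_eq_update (i : Fin n) (η : Fin (n+1) → ℝ) :
    del i.castSucc η = Function.update (del i.succ η) i (η i.succ) := by
  funext j
  rw [Function.update_apply]
  rcases eq_or_ne j i with rfl | hj
  · rw [if_pos rfl, del]
    congr 1
    rw [Fin.succAbove]
    rw [if_neg (by rw [Fin.lt_def]; omega)]
  · rw [if_neg hj, del, del]
    congr 1
    rw [Fin.succAbove, Fin.succAbove]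
    have hne : (j : ℕ) ≠ (i : ℕ) := fun h => hj (Fin.ext h)
    rcases Nat.lt_trichotomy (j : ℕ) (i : ℕ) with h | h | h
    · rw [if_pos (by rw [Fin.lt_def]; simp only [Fin.coe_castSucc]; omega),
        if_pos (by rw [Fin.lt_def]; simp only [Fin.coe_castSucc, Fin.val_succ]; omega)]
    · exact absurd h hne
    · rw [if_neg (by rw [Fin.lt_def]; simp only [Fin.coe_castSucc]; omega),
        if_neg (by rw [Fin.lt_def]; simp only [Fin.coe_castSucc, Fin.val_succ]; omega)]

lemma norm_update_sub (x : Fin n → ℝ) (i : Fin n) (v : ℝ) :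
    ‖Function.update x i v - x‖ ≤ |v - x i| := by
  rw [show (Function.update x i v - x : Fin n → ℝ)
      = fun j => Function.update x i v j - x j from rfl]
  refine (pi_norm_le_iff_of_nonneg (abs_nonneg _)).2 fun j => ?_
  rw [Real.norm_eq_abs, Function.update_apply]
  rcases eq_or_ne j i with rfl | hj
  · rw [if_pos rfl]
  · rw [if_neg hj]
    simp [abs_nonneg]

lemma abs_Akern_le
    (hlip : ∀ x ∈ Set.Icc (fun _ : Fin n => θL) (fun _ => θR),
      ∀ y ∈ Set.Icc (fun _ : Fin n => θL) (fun _ => θR), |f y - f x| ≤ K * ‖y - x‖)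
    (hK : 0 ≤ K) (i : Fin n) (η : Fin (n+1) → ℝ)
    (hη : η ∈ oS (n+1) θL θR) : |Akern f i η| ≤ K := by
  have hbox := oS_subset_box' hη
  rcases eq_or_ne (η i.succ - η i.castSucc) 0 with h0 | h0
  · have : del i.castSucc η = del i.succ η := by
      rw [del_castSucc_eq_update, show η i.succ = η i.castSucc by
        linarith [sub_eq_zero.1 h0], ← del_succ_apply_self i η]
      exact Function.update_eq_self i _
    rw [Akern, this, sub_self, zero_div, abs_zero]
    exact hK
  · rw [Akern, abs_div]
    rw [div_le_iff₀ (abs_pos.2 h0)]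
    calc |f (del i.castSucc η) - f (del i.succ η)|
        ≤ K * ‖del i.castSucc η - del i.succ η‖ :=
          hlip _ (del_mem_box _ _ hbox) _ (del_mem_box _ _ hbox)
      _ ≤ K * |η i.succ - η i.castSucc| := by
          refine mul_le_mul_of_nonneg_left ?_ hK
          rw [del_castSucc_eq_update]
          have := norm_update_sub (del i.succ η) i (η i.succ)
          rwa [del_succ_apply_self i η] at this

lemma aesm_Akern (hfc : ContinuousOn f (Set.Icc (fun _ : Fin n => θL) (fun _ => θR)))
    (i : Fin n) :
    AEStronglyMeasurable (Akern f i) (volume.restrict (oS (n+1) θL θR)) := by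
  have hdel : ∀ k : Fin (n+1), Continuous (del (n := n) k) :=
    fun k => continuous_pi fun j => continuous_apply _
  have hnum : ContinuousOn (fun η => f (del i.castSucc η) - f (del i.succ η))
      (oS (n+1) θL θR) := by
    refine ContinuousOn.sub ?_ ?_ <;>
      exact hfc.comp (hdel _).continuousOn
        (fun η hη => del_mem_box _ _ (oS_subset_box' hη))
  have hd : Measurable fun η : Fin (n+1) → ℝ => (η i.succ - η i.castSucc)⁻¹ :=
    ((measurable_pi_apply i.succ).sub (measurable_pi_apply i.castSucc)).inv
  have : Akern f i = fun η => (f (del i.castSucc η) - f (del i.succ η))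
      * (η i.succ - η i.castSucc)⁻¹ := by
    funext η
    rw [Akern, div_eq_mul_inv]
  rw [this]
  exact (hnum.aestronglyMeasurable measurableSet_oS').mul
    (hd.aestronglyMeasurable.restrict)

lemma up (hfc : ContinuousOn f (Set.Icc (fun _ : Fin n => θL) (fun _ => θR)))
    (hlip : ∀ x ∈ Set.Icc (fun _ : Fin n => θL) (fun _ => θR),
      ∀ y ∈ Set.Icc (fun _ : Fin n => θL) (fun _ => θR), |f y - f x| ≤ K * ‖y - x‖)
    (hK : 0 ≤ K) (i : Fin n) :
    IntegrableOn (fun θ => ∫ z in (θ i)..(nbHi θR i.succ θ),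
        (f (Function.update θ i z) - f θ) / (z - θ i)) (oS n θL θR) volume ∧
    (∫ θ in oS n θL θR, ∫ z in (θ i)..(nbHi θR i.succ θ),
        (f (Function.update θ i z) - f θ) / (z - θ i))
      = ∫ η in oS (n+1) θL θR, Akern f i η := by
  have hcore := core' i.succ (Akern f i) (aesm_Akern f hfc i)
    (abs_Akern_le f hlip hK i)
  have hlo : ∀ θ : Fin n → ℝ, nbLo θL i.succ θ = θ i := by
    intro θ
    rw [nbLo, dif_pos (by simp [Fin.val_succ])]
    exact congrArg θ (Fin.ext (by simp [Fin.val_succ]))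
  have hker : ∀ (θ : Fin n → ℝ) (z : ℝ),
      Akern f i (Fin.insertNth i.succ z θ)
        = (f (Function.update θ i z) - f θ) / (z - θ i) := by
    intro θ z
    rw [Akern, del_castSucc_insert_succ', del_insert_same', insert_apply_same',
      insert_succ_at_castSucc']
  have hle : ∀ θ ∈ oS n θL θR, θ i ≤ nbHi θR i.succ θ := by
    intro θ hθ
    rw [nbHi]
    split
    · refine hθ.1 ?_
      simp only [Fin.le_def, Fin.val_mk, Fin.val_succ]
      omega
    · exact (hθ.2 i).2
  have heq : ∀ θ ∈ oS n θL θR,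
      (∫ z in (θ i)..(nbHi θR i.succ θ), (f (Function.update θ i z) - f θ) / (z - θ i))
        = ∫ z in Ioc (nbLo θL i.succ θ) (nbHi θR i.succ θ),
            Akern f i (Fin.insertNth i.succ z θ) := by
    intro θ hθ
    rw [hlo, intervalIntegral.integral_of_le (hle θ hθ)]
    refine setIntegral_congr_fun measurableSet_Ioc fun z _ => ?_
    rw [hker]
  constructor
  · exact IntegrableOn.congr_fun hcore.1 (fun θ hθ => (heq θ hθ).symm) measurableSet_oS'
  · rw [← hcore.2]
    exact setIntegral_congr_fun measurableSet_oS' fun θ hθ => heq θ hθ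

lemma down (hfc : ContinuousOn f (Set.Icc (fun _ : Fin n => θL) (fun _ => θR)))
    (hlip : ∀ x ∈ Set.Icc (fun _ : Fin n => θL) (fun _ => θR),
      ∀ y ∈ Set.Icc (fun _ : Fin n => θL) (fun _ => θR), |f y - f x| ≤ K * ‖y - x‖)
    (hK : 0 ≤ K) (i : Fin n) :
    IntegrableOn (fun θ => ∫ z in (θ i)..(nbLo θL i.castSucc θ),
        (f (Function.update θ i z) - f θ) / (z - θ i)) (oS n θL θR) volume ∧
    (∫ θ in oS n θL θR, ∫ z in (θ i)..(nbLo θL i.castSucc θ),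
        (f (Function.update θ i z) - f θ) / (z - θ i))
      = -∫ η in oS (n+1) θL θR, Akern f i η := by
  have hcore := core' i.castSucc (Akern f i) (aesm_Akern f hfc i)
    (abs_Akern_le f hlip hK i)
  have hhi : ∀ θ : Fin n → ℝ, nbHi θR i.castSucc θ = θ i := by
    intro θ
    rw [nbHi, dif_pos (by simpa [Fin.coe_castSucc] using i.isLt)]
    exact congrArg θ (Fin.ext (by simp [Fin.coe_castSucc]))
  have hker : ∀ (θ : Fin n → ℝ) (z : ℝ),
      Akern f i (Fin.insertNth i.castSucc z θ)
        = (f (Function.update θ i z) - f θ) / (z - θ i) := by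
    intro θ z
    rw [Akern, del_succ_insert_castSucc', del_insert_same', insert_apply_same',
      insert_castSucc_at_succ']
    rw [show f θ - f (Function.update θ i z) = -(f (Function.update θ i z) - f θ) by ring,
      show θ i - z = -(z - θ i) by ring, neg_div_neg_eq]
  have hle : ∀ θ ∈ oS n θL θR, nbLo θL i.castSucc θ ≤ θ i := by
    intro θ hθ
    rw [nbLo]
    split
    · refine hθ.1 ?_
      simp only [Fin.le_def, Fin.val_mk, Fin.coe_castSucc]
      omega
    · exact (hθ.2 i).1
  have heq : ∀ θ ∈ oS n θL θR,
      (∫ z in (θ i)..(nbLo θL i.castSucc θ), (f (Function.update θ i z) - f θ) / (z - θ i))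
        = -∫ z in Ioc (nbLo θL i.castSucc θ) (nbHi θR i.castSucc θ),
            Akern f i (Fin.insertNth i.castSucc z θ) := by
    intro θ hθ
    rw [hhi, intervalIntegral.integral_symm, intervalIntegral.integral_of_le (hle θ hθ)]
    rw [neg_inj]
    refine setIntegral_congr_fun measurableSet_Ioc fun z _ => (hker θ z).symm
  constructor
  · exact IntegrableOn.congr_fun hcore.1.neg
      (fun θ hθ => by simp only [Pi.neg_apply]; rw [← heq θ hθ]) measurableSet_oS'
  · rw [← hcore.2, ← integral_neg]
    exact setIntegral_congr_fun measurableSet_oS' fun θ hθ => heq θ hθ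

end UpDown

lemma upd_mem_box' {n : ℕ} {θ : Fin n → ℝ}
    (hθ : θ ∈ Set.Icc (fun _ : Fin n => θL) (fun _ => θR))
    {t u : ℝ} (ht : t ∈ Set.Icc θL θR) (hu : u ∈ Set.Icc (0:ℝ) 1) (j : Fin n) :
    Function.update θ j (θ j + u * (t - θ j))
      ∈ Set.Icc (fun _ : Fin n => θL) (fun _ => θR) := by
  have h1 : θL ≤ θ j := hθ.1 j
  have h2 : θ j ≤ θR := hθ.2 j
  constructor
  · intro x
    simp only [Function.update_apply]
    split_ifs with h
    · show θL ≤ _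
      nlinarith [hu.1, hu.2, ht.1, ht.2]
    · exact hθ.1 x
  · intro x
    simp only [Function.update_apply]
    split_ifs with h
    · show _ ≤ θR
      nlinarith [hu.1, hu.2, ht.1, ht.2]
    · exact hθ.2 x

lemma norm_update_sub' {n : ℕ} (x : Fin n → ℝ) (i : Fin n) (v : ℝ) :
    ‖Function.update x i v - x‖ ≤ |v - x i| := by
  rw [show (Function.update x i v - x : Fin n → ℝ)
      = fun j => Function.update x i v j - x j from rfl]
  refine (pi_norm_le_iff_of_nonneg (abs_nonneg _)).2 fun j => ?_
  rw [Real.norm_eq_abs, Function.update_apply]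
  rcases eq_or_ne j i with rfl | hj
  · rw [if_pos rfl]
  · rw [if_neg hj]
    simp [abs_nonneg]

lemma absdiff_le'' {n : ℕ} {f : (Fin n → ℝ) → ℝ} {K : ℝ}
    (hlip : ∀ x ∈ Set.Icc (fun _ : Fin n => θL) (fun _ => θR),
      ∀ y ∈ Set.Icc (fun _ : Fin n => θL) (fun _ => θR), |f y - f x| ≤ K * ‖y - x‖)
    (hK : 0 ≤ K) {θ : Fin n → ℝ}
    (hθ : θ ∈ Set.Icc (fun _ : Fin n => θL) (fun _ => θR))
    {t u : ℝ} (ht : t ∈ Set.Icc θL θR) (hu : u ∈ Set.Icc (0:ℝ) 1) (j : Fin n) :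
    |f (Function.update θ j (θ j + u * (t - θ j))) - f θ| ≤ K * (u * (θR - θL)) := by
  refine (hlip θ hθ _ (upd_mem_box' hθ ht hu j)).trans ?_
  have h2 : ‖Function.update θ j (θ j + u * (t - θ j)) - θ‖ ≤ |θ j + u * (t - θ j) - θ j| :=
    norm_update_sub' θ j _
  have htt : |t - θ j| ≤ θR - θL := by
    have h1 : θL ≤ θ j := hθ.1 j
    have h2 : θ j ≤ θR := hθ.2 j
    rw [abs_le]
    constructor <;> linarith [ht.1, ht.2]
  calc K * ‖Function.update θ j (θ j + u * (t - θ j)) - θ‖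
      ≤ K * |θ j + u * (t - θ j) - θ j| := mul_le_mul_of_nonneg_left h2 hK
    _ = K * (|u| * |t - θ j|) := by rw [add_sub_cancel_left, abs_mul]
    _ ≤ K * (u * (θR - θL)) := by
        rw [abs_of_nonneg hu.1]
        exact mul_le_mul_of_nonneg_left
          (mul_le_mul_of_nonneg_left htt hu.1) hK

lemma term_integrableOn' {n : ℕ} {f : (Fin n → ℝ) → ℝ} {K : ℝ}
    (hfc : ContinuousOn f (Set.Icc (fun _ : Fin n => θL) (fun _ => θR)))
    (hlip : ∀ x ∈ Set.Icc (fun _ : Fin n => θL) (fun _ => θR),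
      ∀ y ∈ Set.Icc (fun _ : Fin n => θL) (fun _ => θR), |f y - f x| ≤ K * ‖y - x‖)
    (hK : 0 ≤ K) {θ : Fin n → ℝ}
    (hθ : θ ∈ Set.Icc (fun _ : Fin n => θL) (fun _ => θR))
    {t : ℝ} (ht : t ∈ Set.Icc θL θR) (j : Fin n) :
    IntegrableOn (fun u => u⁻¹ * (f (Function.update θ j (θ j + u * (t - θ j))) - f θ))
      (Set.Ioo (0:ℝ) 1) volume := by
  constructor
  · refine ContinuousOn.aestronglyMeasurable ?_ measurableSet_Ioo
    refine ContinuousOn.mul ?_ ?_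
    · exact ContinuousOn.inv₀ continuousOn_id fun u hu => ne_of_gt hu.1
    · refine ContinuousOn.sub ?_ continuousOn_const
      refine hfc.comp ?_ ?_
      · refine Continuous.continuousOn ?_
        refine continuous_pi fun x => ?_
        rcases eq_or_ne x j with rfl | hx
        · have hrw : (fun u : ℝ => Function.update θ x (θ x + u * (t - θ x)) x)
              = fun u => θ x + u * (t - θ x) := by
            funext u; rw [Function.update_self]
          rw [hrw]
          fun_prop
        · have hrw : (fun u : ℝ => Function.update θ j (θ j + u * (t - θ j)) x)
              = fun _ => θ x := by
            funext u; rw [Function.update_of_ne hx]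
          rw [hrw]
          exact continuous_const
      · intro u hu
        exact upd_mem_box' hθ ht ⟨hu.1.le, hu.2.le⟩ j
  · refine HasFiniteIntegral.restrict_of_bounded (C := K * (θR - θL))
      measure_Ioo_lt_top ?_
    refine (ae_restrict_iff' measurableSet_Ioo).2 (Filter.Eventually.of_forall fun u hu => ?_)
    have hD := absdiff_le'' hlip hK hθ ht ⟨hu.1.le, hu.2.le⟩ j
    rw [Real.norm_eq_abs, abs_mul, abs_inv, abs_of_pos hu.1]
    calc u⁻¹ * |f (Function.update θ j (θ j + u * (t - θ j))) - f θ|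
        ≤ u⁻¹ * (K * (u * (θR - θL))) :=
          mul_le_mul_of_nonneg_left hD (inv_nonneg.2 hu.1.le)
      _ = K * (θR - θL) := by
          have hu0 : u ≠ 0 := ne_of_gt hu.1
          field_simp

lemma sub1' {n : ℕ} (f : (Fin n → ℝ) → ℝ) (θ : Fin n → ℝ) (j : Fin n) (t : ℝ) :
    ∫ u in Ioo (0:ℝ) 1, u⁻¹ * (f (Function.update θ j (θ j + u * (t - θ j))) - f θ)
      = ∫ z in (θ j)..t, (f (Function.update θ j z) - f θ) / (z - θ j) := by
  have h := sub1'' (fun z => f (Function.update θ j z) - f θ) (θ j) t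
    (by show f (Function.update θ j (θ j)) - f θ = 0; rw [Function.update_eq_self]; ring)
  simpa using h

section Conj1

variable {n : ℕ} {f : (Fin n → ℝ) → ℝ} {K : ℝ}

lemma cont_comp_term
    (hfc : ContinuousOn f (Set.Icc (fun _ : Fin n => θL) (fun _ => θR)))
    (j : Fin n) (tf : (Fin n → ℝ) → ℝ) (htf : Continuous tf)
    (htm : ∀ θ ∈ oS n θL θR, tf θ ∈ Set.Icc θL θR) :
    ContinuousOn
      (fun q : (Fin n → ℝ) × ℝ =>
        f (Function.update q.1 j (q.1 j + q.2 * (tf q.1 - q.1 j))))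
      ((oS n θL θR) ×ˢ Set.Ioo (0:ℝ) 1) := by
  refine hfc.comp ?_ ?_
  · refine Continuous.continuousOn (continuous_pi fun x => ?_)
    have cx : Continuous fun q : (Fin n → ℝ) × ℝ => q.1 x :=
      (continuous_apply x).comp continuous_fst
    have cj : Continuous fun q : (Fin n → ℝ) × ℝ => q.1 j :=
      (continuous_apply j).comp continuous_fst
    rcases eq_or_ne x j with rfl | hx
    · have hrw : (fun q : (Fin n → ℝ) × ℝ =>
          Function.update q.1 x (q.1 x + q.2 * (tf q.1 - q.1 x)) x)
          = fun q => q.1 x + q.2 * (tf q.1 - q.1 x) := by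
        funext q; rw [Function.update_self]
      rw [hrw]
      exact cx.add (continuous_snd.mul ((htf.comp continuous_fst).sub cx))
    · have hrw : (fun q : (Fin n → ℝ) × ℝ =>
          Function.update q.1 j (q.1 j + q.2 * (tf q.1 - q.1 j)) x)
          = fun q => q.1 x := by
        funext q; rw [Function.update_of_ne hx]
      rw [hrw]
      exact cx
  · rintro q hq
    exact upd_mem_box' (oS_subset_box' hq.1) (htm _ hq.1) ⟨hq.2.1.le, hq.2.2.le⟩ j

lemma conj1 {M : ℕ} (hN : 0 < M + 1) (hLR : θL < θR) {f : (Fin (M+1) → ℝ) → ℝ} {K : ℝ}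
    (hfc : ContinuousOn f (Set.Icc (fun _ : Fin (M+1) => θL) (fun _ => θR)))
    (hlip : ∀ x ∈ Set.Icc (fun _ : Fin (M+1) => θL) (fun _ => θR),
      ∀ y ∈ Set.Icc (fun _ : Fin (M+1) => θL) (fun _ => θR), |f y - f x| ≤ K * ‖y - x‖)
    (hK : 0 ≤ K) :
    IntegrableOn (fun q : (Fin (M+1) → ℝ) × ℝ => hiddenChainGenInt (M+1) hN θL θR f q.1 q.2)
      ((oS (M+1) θL θR) ×ˢ Set.Ioo (0:ℝ) 1) volume := by
  have hLR' : θL ∈ Set.Icc θL θR := ⟨le_refl _, hLR.le⟩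
  have hRR : θR ∈ Set.Icc θL θR := ⟨hLR.le, le_refl _⟩
  have hmeasSet : MeasurableSet ((oS (M+1) θL θR) ×ˢ Set.Ioo (0:ℝ) 1) :=
    measurableSet_oS'.prod measurableSet_Ioo
  constructor
  · refine ContinuousOn.aestronglyMeasurable ?_ hmeasSet
    have hfθ : ContinuousOn (fun q : (Fin (M+1) → ℝ) × ℝ => f q.1)
        ((oS (M+1) θL θR) ×ˢ Set.Ioo (0:ℝ) 1) :=
      hfc.comp continuous_fst.continuousOn (fun q hq => oS_subset_box' hq.1)
    refine ContinuousOn.mul ?_ ?_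
    · exact (continuous_snd.continuousOn).inv₀ fun q hq => ne_of_gt hq.2.1
    · refine ContinuousOn.add (ContinuousOn.add ?_ ?_) ?_
      · exact (cont_comp_term hfc _ (fun _ => θL) continuous_const
          (fun θ _ => hLR')).sub hfθ
      · exact (cont_comp_term hfc _ (fun _ => θR) continuous_const
          (fun θ _ => hRR)).sub hfθ
      · refine continuousOn_finset_sum _ fun i _ => ?_
        refine ContinuousOn.sub (ContinuousOn.add ?_ ?_) ?_
        · exact cont_comp_term hfc _ (fun θ => θ ⟨i.1 + 1, by omega⟩)
            (continuous_apply _) (fun θ hθ => hθ.2 _)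
        · exact cont_comp_term hfc _ (fun θ => θ ⟨i.1, by omega⟩)
            (continuous_apply _) (fun θ hθ => hθ.2 _)
        · exact continuousOn_const.mul hfθ
  · refine HasFiniteIntegral.restrict_of_bounded
      (C := (2 + 2 * M) * (K * (θR - θL))) ?_ ?_
    · refine lt_of_le_of_lt (measure_mono (Set.prod_mono subset_rfl Set.Ioo_subset_Icc_self)) ?_
      exact (isCompact_oS'.prod isCompact_Icc).measure_lt_top
    · refine (ae_restrict_iff' hmeasSet).2 (Filter.Eventually.of_forall fun q hq => ?_)
      obtain ⟨hθS, hu⟩ := hq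
      have hθ := oS_subset_box' hθS
      have hu' : q.2 ∈ Set.Icc (0:ℝ) 1 := ⟨hu.1.le, hu.2.le⟩
      have hu0 : (0:ℝ) < q.2 := hu.1
      set u := q.2 with hudef
      set θ := q.1 with hθdef
      have harith : ∀ A B SS E : ℝ, |A| ≤ E → |B| ≤ E → |SS| ≤ (M:ℝ) * (2 * E) →
          |A + B + SS| ≤ (2 + 2 * M) * E := by
        intro A B SS E h1 h2 h3
        have g1 := abs_add_le (A + B) SS
        have g2 := abs_add_le A B
        linarith
      have hA := absdiff_le'' hlip hK hθ hLR' hu' ⟨0, hN⟩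
      have hB := absdiff_le'' hlip hK hθ hRR hu' ⟨M+1-1, by omega⟩
      have hS : |∑ i : Fin (M+1-1),
           (f (Function.update θ ⟨i.1, by omega⟩ (θ ⟨i.1, by omega⟩ +
                u * (θ ⟨i.1+1, by omega⟩ - θ ⟨i.1, by omega⟩))) +
            f (Function.update θ ⟨i.1+1, by omega⟩ (θ ⟨i.1+1, by omega⟩ +
                u * (θ ⟨i.1, by omega⟩ - θ ⟨i.1+1, by omega⟩))) -
            2 * f θ)| ≤ (M : ℝ) * (2 * (K * (u * (θR - θL)))) := by
        refine (Finset.abs_sum_le_sum_abs _ _).trans ?_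
        have hterm : ∀ i : Fin (M+1-1),
            |f (Function.update θ ⟨i.1, by omega⟩ (θ ⟨i.1, by omega⟩ +
                u * (θ ⟨i.1+1, by omega⟩ - θ ⟨i.1, by omega⟩))) +
             f (Function.update θ ⟨i.1+1, by omega⟩ (θ ⟨i.1+1, by omega⟩ +
                u * (θ ⟨i.1, by omega⟩ - θ ⟨i.1+1, by omega⟩))) -
             2 * f θ| ≤ 2 * (K * (u * (θR - θL))) := by
          intro i
          have h1 := absdiff_le'' hlip hK hθ
            (Set.mem_Icc.2 ⟨hθ.1 ⟨i.1+1, by omega⟩, hθ.2 ⟨i.1+1, by omega⟩⟩) hu' ⟨i.1, by omega⟩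
          have h2 := absdiff_le'' hlip hK hθ
            (Set.mem_Icc.2 ⟨hθ.1 ⟨i.1, by omega⟩, hθ.2 ⟨i.1, by omega⟩⟩) hu' ⟨i.1+1, by omega⟩
          have h3 := abs_add_le (f (Function.update θ ⟨i.1, by omega⟩ (θ ⟨i.1, by omega⟩ +
                u * (θ ⟨i.1+1, by omega⟩ - θ ⟨i.1, by omega⟩))) - f θ)
            (f (Function.update θ ⟨i.1+1, by omega⟩ (θ ⟨i.1+1, by omega⟩ +
                u * (θ ⟨i.1, by omega⟩ - θ ⟨i.1+1, by omega⟩))) - f θ)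
          rw [show f (Function.update θ ⟨i.1, by omega⟩ (θ ⟨i.1, by omega⟩ +
                u * (θ ⟨i.1+1, by omega⟩ - θ ⟨i.1, by omega⟩))) +
             f (Function.update θ ⟨i.1+1, by omega⟩ (θ ⟨i.1+1, by omega⟩ +
                u * (θ ⟨i.1, by omega⟩ - θ ⟨i.1+1, by omega⟩))) -
             2 * f θ = (f (Function.update θ ⟨i.1, by omega⟩ (θ ⟨i.1, by omega⟩ +
                u * (θ ⟨i.1+1, by omega⟩ - θ ⟨i.1, by omega⟩))) - f θ) +
            (f (Function.update θ ⟨i.1+1, by omega⟩ (θ ⟨i.1+1, by omega⟩ +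
                u * (θ ⟨i.1, by omega⟩ - θ ⟨i.1+1, by omega⟩))) - f θ) by ring]
          linarith
        calc (∑ i : Fin (M+1-1), |f (Function.update θ ⟨i.1, by omega⟩ (θ ⟨i.1, by omega⟩ +
                u * (θ ⟨i.1+1, by omega⟩ - θ ⟨i.1, by omega⟩))) +
             f (Function.update θ ⟨i.1+1, by omega⟩ (θ ⟨i.1+1, by omega⟩ +
                u * (θ ⟨i.1, by omega⟩ - θ ⟨i.1+1, by omega⟩))) -
             2 * f θ|)
            ≤ ∑ _i : Fin (M+1-1), 2 * (K * (u * (θR - θL))) :=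
              Finset.sum_le_sum fun i _ => hterm i
          _ = (M : ℝ) * (2 * (K * (u * (θR - θL)))) := by
              rw [Finset.sum_const, Finset.card_univ, Fintype.card_fin]
              simp only [nsmul_eq_mul]
              norm_num
      simp only [hiddenChainGenInt]
      rw [Real.norm_eq_abs, abs_mul, abs_inv, abs_of_pos hu0]
      have hmain := harith _ _ _ _ hA hB hS
      refine le_trans (mul_le_mul_of_nonneg_left hmain (inv_nonneg.2 hu0.le)) (le_of_eq ?_)
      have hu0' : u ≠ 0 := ne_of_gt hu0
      field_simp

end Conj1

lemma gen_split {M : ℕ} (hN : 0 < M + 1) (hLR : θL < θR) (f : (Fin (M+1) → ℝ) → ℝ) {K : ℝ}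
    (hfc : ContinuousOn f (Set.Icc (fun _ : Fin (M+1) => θL) (fun _ => θR)))
    (hlip : ∀ x ∈ Set.Icc (fun _ : Fin (M+1) => θL) (fun _ => θR),
      ∀ y ∈ Set.Icc (fun _ : Fin (M+1) => θL) (fun _ => θR), |f y - f x| ≤ K * ‖y - x‖)
    (hK : 0 ≤ K) {θ : Fin (M+1) → ℝ} (hθS : θ ∈ oS (M+1) θL θR) :
    ∫ u in Ioo (0:ℝ) 1, hiddenChainGenInt (M+1) hN θL θR f θ u
      = (∫ z in (θ ⟨0, hN⟩)..θL,
          (f (Function.update θ ⟨0, hN⟩ z) - f θ) / (z - θ ⟨0, hN⟩))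
      + (∫ z in (θ ⟨M+1-1, by omega⟩)..θR,
          (f (Function.update θ ⟨M+1-1, by omega⟩ z) - f θ) / (z - θ ⟨M+1-1, by omega⟩))
      + ∑ i : Fin (M+1-1),
          ((∫ z in (θ ⟨i.1, by omega⟩)..(θ ⟨i.1+1, by omega⟩),
              (f (Function.update θ ⟨i.1, by omega⟩ z) - f θ) / (z - θ ⟨i.1, by omega⟩))
          + (∫ z in (θ ⟨i.1+1, by omega⟩)..(θ ⟨i.1, by omega⟩),
              (f (Function.update θ ⟨i.1+1, by omega⟩ z) - f θ) / (z - θ ⟨i.1+1, by omega⟩))) := by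
  have hθ := oS_subset_box' hθS
  have hLmem : θL ∈ Set.Icc θL θR := ⟨le_refl _, hLR.le⟩
  have hRmem : θR ∈ Set.Icc θL θR := ⟨hLR.le, le_refl _⟩
  have hcoord : ∀ j : Fin (M+1), θ j ∈ Set.Icc θL θR := fun j => ⟨hθ.1 j, hθ.2 j⟩
  have hint : EqOn (fun u => hiddenChainGenInt (M+1) hN θL θR f θ u)
      (fun u =>
        (u⁻¹ * (f (Function.update θ ⟨0, hN⟩ (θ ⟨0, hN⟩ + u * (θL - θ ⟨0, hN⟩))) - f θ)
        + u⁻¹ * (f (Function.update θ ⟨M+1-1, by omega⟩ (θ ⟨M+1-1, by omega⟩ +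
            u * (θR - θ ⟨M+1-1, by omega⟩))) - f θ))
        + ∑ i : Fin (M+1-1),
          (u⁻¹ * (f (Function.update θ ⟨i.1, by omega⟩ (θ ⟨i.1, by omega⟩ +
              u * (θ ⟨i.1+1, by omega⟩ - θ ⟨i.1, by omega⟩))) - f θ)
          + u⁻¹ * (f (Function.update θ ⟨i.1+1, by omega⟩ (θ ⟨i.1+1, by omega⟩ +
              u * (θ ⟨i.1, by omega⟩ - θ ⟨i.1+1, by omega⟩))) - f θ)))
      (Ioo (0:ℝ) 1) := by
    intro u _
    simp only [hiddenChainGenInt]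
    rw [mul_add, mul_add, Finset.mul_sum]
    congr 1
    exact Finset.sum_congr rfl fun i _ => by ring
  rw [setIntegral_congr_fun measurableSet_Ioo hint]
  have hIL := term_integrableOn' hfc hlip hK hθ hLmem ⟨0, hN⟩
  have hIR := term_integrableOn' hfc hlip hK hθ hRmem ⟨M+1-1, by omega⟩
  have hIU : ∀ i : Fin (M+1-1), IntegrableOn (fun u =>
      u⁻¹ * (f (Function.update θ ⟨i.1, by omega⟩ (θ ⟨i.1, by omega⟩ +
        u * (θ ⟨i.1+1, by omega⟩ - θ ⟨i.1, by omega⟩))) - f θ)) (Ioo (0:ℝ) 1) volume :=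
    fun i => term_integrableOn' hfc hlip hK hθ (hcoord ⟨i.1+1, by omega⟩) ⟨i.1, by omega⟩
  have hID : ∀ i : Fin (M+1-1), IntegrableOn (fun u =>
      u⁻¹ * (f (Function.update θ ⟨i.1+1, by omega⟩ (θ ⟨i.1+1, by omega⟩ +
        u * (θ ⟨i.1, by omega⟩ - θ ⟨i.1+1, by omega⟩))) - f θ)) (Ioo (0:ℝ) 1) volume :=
    fun i => term_integrableOn' hfc hlip hK hθ (hcoord ⟨i.1, by omega⟩) ⟨i.1+1, by omega⟩
  have h12 : IntegrableOn (fun u : ℝ =>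
      u⁻¹ * (f (Function.update θ ⟨0, hN⟩ (θ ⟨0, hN⟩ + u * (θL - θ ⟨0, hN⟩))) - f θ)
      + u⁻¹ * (f (Function.update θ ⟨M+1-1, by omega⟩ (θ ⟨M+1-1, by omega⟩ +
          u * (θR - θ ⟨M+1-1, by omega⟩))) - f θ)) (Ioo (0:ℝ) 1) volume := hIL.add hIR
  have hUD : ∀ i : Fin (M+1-1), IntegrableOn (fun u : ℝ =>
      u⁻¹ * (f (Function.update θ ⟨i.1, by omega⟩ (θ ⟨i.1, by omega⟩ +
          u * (θ ⟨i.1+1, by omega⟩ - θ ⟨i.1, by omega⟩))) - f θ)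
      + u⁻¹ * (f (Function.update θ ⟨i.1+1, by omega⟩ (θ ⟨i.1+1, by omega⟩ +
          u * (θ ⟨i.1, by omega⟩ - θ ⟨i.1+1, by omega⟩))) - f θ)) (Ioo (0:ℝ) 1) volume :=
    fun i => (hIU i).add (hID i)
  have hSig : IntegrableOn (fun u : ℝ => ∑ i : Fin (M+1-1),
      (u⁻¹ * (f (Function.update θ ⟨i.1, by omega⟩ (θ ⟨i.1, by omega⟩ +
          u * (θ ⟨i.1+1, by omega⟩ - θ ⟨i.1, by omega⟩))) - f θ)
      + u⁻¹ * (f (Function.update θ ⟨i.1+1, by omega⟩ (θ ⟨i.1+1, by omega⟩ +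
          u * (θ ⟨i.1, by omega⟩ - θ ⟨i.1+1, by omega⟩))) - f θ))) (Ioo (0:ℝ) 1) volume :=
    integrable_finset_sum _ fun i _ => hUD i
  rw [integral_add h12 hSig, integral_add hIL hIR,
    integral_finset_sum _ fun i _ => hUD i]
  rw [sub1' f θ ⟨0, hN⟩ θL, sub1' f θ ⟨M+1-1, by omega⟩ θR]
  congr 1
  refine Finset.sum_congr rfl fun i _ => ?_
  rw [integral_add (hIU i) (hID i), sub1' f θ ⟨i.1, by omega⟩ (θ ⟨i.1+1, by omega⟩),
    sub1' f θ ⟨i.1+1, by omega⟩ (θ ⟨i.1, by omega⟩)]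

end HiddenChain

open HiddenChain

theorem order_statistics_stationary (N : ℕ) (hN : 0 < N) (θL θR : ℝ) (hLR : θL < θR)
    (f : (Fin N → ℝ) → ℝ)
    (hf : ContDiffOn ℝ 1 f (Set.Icc (fun _ => θL) (fun _ => θR))) :
    IntegrableOn (fun q : (Fin N → ℝ) × ℝ => hiddenChainGenInt N hN θL θR f q.1 q.2)
      (({θ : Fin N → ℝ | Monotone θ ∧ ∀ i, θ i ∈ Set.Icc θL θR}) ×ˢ Set.Ioo 0 1)
      volume ∧
    (∫ θ in {θ : Fin N → ℝ | Monotone θ ∧ ∀ i, θ i ∈ Set.Icc θL θR},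
        ((N.factorial : ℝ) / (θR - θL) ^ N) *
          ∫ u in Set.Ioo (0:ℝ) 1, hiddenChainGenInt N hN θL θR f θ u) = 0 := by
  obtain ⟨M, rfl⟩ : ∃ M, N = M + 1 := ⟨N - 1, by omega⟩
  obtain ⟨K, hK, hlip⟩ := exists_lip hLR f hf
  have hfc : ContinuousOn f (Set.Icc (fun _ : Fin (M+1) => θL) (fun _ => θR)) :=
    hf.continuousOn
  have hSm : MeasurableSet (oS (M+1) θL θR) := measurableSet_oS'
  refine ⟨conj1 hN hLR hfc hlip hK, ?_⟩
  rw [show {θ : Fin (M+1) → ℝ | Monotone θ ∧ ∀ i, θ i ∈ Set.Icc θL θR}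
    = oS (M+1) θL θR from rfl]
  rw [integral_const_mul]
  refine mul_eq_zero_of_right _ ?_
  rw [setIntegral_congr_fun hSm (fun θ hθ => gen_split hN hLR f hfc hlip hK hθ)]
  -- endpoint conversions
  have hLo0 : ∀ θ : Fin (M+1) → ℝ, nbLo θL (⟨0, hN⟩ : Fin (M+1)).castSucc θ = θL := by
    intro θ
    rw [nbLo, dif_neg]
    simp [Fin.coe_castSucc]
  have hHiN : ∀ θ : Fin (M+1) → ℝ,
      nbHi θR (⟨M+1-1, by omega⟩ : Fin (M+1)).succ θ = θR := by
    intro θ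
    rw [nbHi, dif_neg]
    simp only [Fin.val_succ, Fin.val_mk]
    omega
  have hHiU : ∀ (i : Fin (M+1-1)) (θ : Fin (M+1) → ℝ),
      nbHi θR (⟨i.1, by omega⟩ : Fin (M+1)).succ θ = θ ⟨i.1+1, by omega⟩ := by
    intro i θ
    rw [nbHi, dif_pos (by simp only [Fin.val_succ, Fin.val_mk]; omega)]
    exact congrArg θ (Fin.ext (by simp only [Fin.val_succ, Fin.val_mk]))
  have hLoD : ∀ (i : Fin (M+1-1)) (θ : Fin (M+1) → ℝ),
      nbLo θL (⟨i.1+1, by omega⟩ : Fin (M+1)).castSucc θ = θ ⟨i.1, by omega⟩ := by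
    intro i θ
    rw [nbLo, dif_pos (by simp only [Fin.coe_castSucc, Fin.val_mk]; omega)]
    exact congrArg θ (Fin.ext (by simp only [Fin.coe_castSucc, Fin.val_mk]; omega))
  -- rewrite goal into up/down shape
  rw [show (fun θ : Fin (M+1) → ℝ =>
      (∫ z in (θ ⟨0, hN⟩)..θL,
          (f (Function.update θ ⟨0, hN⟩ z) - f θ) / (z - θ ⟨0, hN⟩))
      + (∫ z in (θ ⟨M+1-1, by omega⟩)..θR,
          (f (Function.update θ ⟨M+1-1, by omega⟩ z) - f θ) / (z - θ ⟨M+1-1, by omega⟩))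
      + ∑ i : Fin (M+1-1),
          ((∫ z in (θ ⟨i.1, by omega⟩)..(θ ⟨i.1+1, by omega⟩),
              (f (Function.update θ ⟨i.1, by omega⟩ z) - f θ) / (z - θ ⟨i.1, by omega⟩))
          + (∫ z in (θ ⟨i.1+1, by omega⟩)..(θ ⟨i.1, by omega⟩),
              (f (Function.update θ ⟨i.1+1, by omega⟩ z) - f θ) / (z - θ ⟨i.1+1, by omega⟩))))
    = fun θ : Fin (M+1) → ℝ =>
      (∫ z in (θ ⟨0, hN⟩)..(nbLo θL (⟨0, hN⟩ : Fin (M+1)).castSucc θ),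
          (f (Function.update θ ⟨0, hN⟩ z) - f θ) / (z - θ ⟨0, hN⟩))
      + (∫ z in (θ ⟨M+1-1, by omega⟩)..(nbHi θR (⟨M+1-1, by omega⟩ : Fin (M+1)).succ θ),
          (f (Function.update θ ⟨M+1-1, by omega⟩ z) - f θ) / (z - θ ⟨M+1-1, by omega⟩))
      + ∑ i : Fin (M+1-1),
          ((∫ z in (θ ⟨i.1, by omega⟩)..(nbHi θR (⟨i.1, by omega⟩ : Fin (M+1)).succ θ),
              (f (Function.update θ ⟨i.1, by omega⟩ z) - f θ) / (z - θ ⟨i.1, by omega⟩))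
          + (∫ z in (θ ⟨i.1+1, by omega⟩)..(nbLo θL (⟨i.1+1, by omega⟩ : Fin (M+1)).castSucc θ),
              (f (Function.update θ ⟨i.1+1, by omega⟩ z) - f θ) / (z - θ ⟨i.1+1, by omega⟩)))
    from funext fun θ => by
      rw [hLo0 θ, hHiN θ]
      congr 1
      exact Finset.sum_congr rfl fun i _ => by rw [hHiU i θ, hLoD i θ]]
  -- integrability instances
  have hD0 := down f hfc hlip hK (⟨0, hN⟩ : Fin (M+1))
  have hUR := up f hfc hlip hK (⟨M+1-1, by omega⟩ : Fin (M+1))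
  have hUi : ∀ i : Fin (M+1-1), _ := fun i => up f hfc hlip hK (⟨i.1, by omega⟩ : Fin (M+1))
  have hDi : ∀ i : Fin (M+1-1), _ := fun i => down f hfc hlip hK (⟨i.1+1, by omega⟩ : Fin (M+1))
  have h12 : IntegrableOn (fun θ : Fin (M+1) → ℝ =>
      (∫ z in (θ ⟨0, hN⟩)..(nbLo θL (⟨0, hN⟩ : Fin (M+1)).castSucc θ),
          (f (Function.update θ ⟨0, hN⟩ z) - f θ) / (z - θ ⟨0, hN⟩))
      + (∫ z in (θ ⟨M+1-1, by omega⟩)..(nbHi θR (⟨M+1-1, by omega⟩ : Fin (M+1)).succ θ),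
          (f (Function.update θ ⟨M+1-1, by omega⟩ z) - f θ) / (z - θ ⟨M+1-1, by omega⟩)))
      (oS (M+1) θL θR) volume := hD0.1.add hUR.1
  have hUD : ∀ i : Fin (M+1-1), IntegrableOn (fun θ : Fin (M+1) → ℝ =>
      (∫ z in (θ ⟨i.1, by omega⟩)..(nbHi θR (⟨i.1, by omega⟩ : Fin (M+1)).succ θ),
          (f (Function.update θ ⟨i.1, by omega⟩ z) - f θ) / (z - θ ⟨i.1, by omega⟩))
      + (∫ z in (θ ⟨i.1+1, by omega⟩)..(nbLo θL (⟨i.1+1, by omega⟩ : Fin (M+1)).castSucc θ),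
          (f (Function.update θ ⟨i.1+1, by omega⟩ z) - f θ) / (z - θ ⟨i.1+1, by omega⟩)))
      (oS (M+1) θL θR) volume := fun i => (hUi i).1.add (hDi i).1
  have hSig : IntegrableOn (fun θ : Fin (M+1) → ℝ => ∑ i : Fin (M+1-1),
      ((∫ z in (θ ⟨i.1, by omega⟩)..(nbHi θR (⟨i.1, by omega⟩ : Fin (M+1)).succ θ),
          (f (Function.update θ ⟨i.1, by omega⟩ z) - f θ) / (z - θ ⟨i.1, by omega⟩))
      + (∫ z in (θ ⟨i.1+1, by omega⟩)..(nbLo θL (⟨i.1+1, by omega⟩ : Fin (M+1)).castSucc θ),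
          (f (Function.update θ ⟨i.1+1, by omega⟩ z) - f θ) / (z - θ ⟨i.1+1, by omega⟩))))
      (oS (M+1) θL θR) volume := integrable_finset_sum _ fun i _ => hUD i
  rw [integral_add h12 hSig, integral_add hD0.1 hUR.1,
    integral_finset_sum _ fun i _ => hUD i]
  rw [hD0.2, hUR.2]
  have hper : ∀ i : Fin (M+1-1),
      (∫ θ in oS (M+1) θL θR,
        ((∫ z in (θ ⟨i.1, by omega⟩)..(nbHi θR (⟨i.1, by omega⟩ : Fin (M+1)).succ θ),
          (f (Function.update θ ⟨i.1, by omega⟩ z) - f θ) / (z - θ ⟨i.1, by omega⟩))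
      + (∫ z in (θ ⟨i.1+1, by omega⟩)..(nbLo θL (⟨i.1+1, by omega⟩ : Fin (M+1)).castSucc θ),
          (f (Function.update θ ⟨i.1+1, by omega⟩ z) - f θ) / (z - θ ⟨i.1+1, by omega⟩))))
      = (∫ η in oS (M+1+1) θL θR, Akern f (⟨i.1, by omega⟩ : Fin (M+1)) η)
        - (∫ η in oS (M+1+1) θL θR, Akern f (⟨i.1+1, by omega⟩ : Fin (M+1)) η) := by
    intro i
    rw [integral_add (hUi i).1 (hDi i).1, (hUi i).2, (hDi i).2]
    ring
  rw [Finset.sum_congr rfl fun i _ => hper i]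
  -- telescoping
  set G : ℕ → ℝ := fun k =>
    if h : k < M+1 then ∫ η in oS (M+1+1) θL θR, Akern f (⟨k, h⟩ : Fin (M+1)) η else 0
    with hG
  have hGk : ∀ (k : ℕ) (h : k < M+1),
      (∫ η in oS (M+1+1) θL θR, Akern f (⟨k, h⟩ : Fin (M+1)) η) = G k := by
    intro k h
    rw [hG]
    simp only
    rw [dif_pos h]
  rw [hGk 0 hN, hGk (M+1-1) (by omega)]
  rw [Finset.sum_congr rfl fun (i : Fin (M+1-1)) _ => by
    rw [hGk i.1 (by omega), hGk (i.1+1) (by omega)]]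
  rw [Fin.sum_univ_eq_sum_range (fun k => G k - G (k+1)) (M+1-1)]
  rw [Finset.sum_range_sub' G (M+1-1)]
  ring
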